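/- With the Dulac function φ(x1, x2) = 1/(x1 x2), for all x1 > 0 and x2 > 0, ∂/∂x1 (φ·f1) + ∂/∂x2 (φ·f2) = -(αβ/x2 + ζ/(x1 x2²)), which is strictly negative. -/

import Mathlib

/-- Dulac–Bendixson computation with `φ(x1,x2) = 1/(x1 x2)` on the positive quadrant:
the divergence of `(φ f1, φ f2)` equals `-(αβ/x2 + ζ/(x1 x2²)) < 0`. -/
theorem dulac_criterion
    (α β ζ lam η θ : ℝ) (hα : 0 < α) (hβ : 0 < β) (hζ : 0 < ζ)
    (hlam : 0 < lam) (hη : 0 < η) (hθ : 0 < θ)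
    (f1 f2 φ : ℝ → ℝ → ℝ)
    (hf1 : ∀ x1 x2, f1 x1 x2 = α * x1 * (1 - β * x1) - x1 * x2)
    (hf2 : ∀ x1 x2, f2 x1 x2 = ζ - lam * x2 + η * x1 * x2 / (θ + x1))
    (hφ : ∀ x1 x2, φ x1 x2 = 1 / (x1 * x2)) :
    ∀ x1 x2 : ℝ, 0 < x1 → 0 < x2 →
      deriv (fun y1 => φ y1 x2 * f1 y1 x2) x1 +
        deriv (fun y2 => φ x1 y2 * f2 x1 y2) x2 =
        -(α * β / x2 + ζ / (x1 * x2 ^ 2)) ∧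
      -(α * β / x2 + ζ / (x1 * x2 ^ 2)) < 0 := by
  intro x1 x2 hx1 hx2
  constructor
  · -- first derivative
    have hθx : θ + x1 ≠ 0 := by positivity
    have h1 : (fun y1 => φ y1 x2 * f1 y1 x2) =ᶠ[nhds x1]
        (fun y1 => α / x2 - (α * β / x2) * y1 - 1) := by
      filter_upwards [eventually_gt_nhds hx1] with y hy
      rw [hφ, hf1]
      field_simp
    have h2 : (fun y2 => φ x1 y2 * f2 x1 y2) =ᶠ[nhds x2]
        (fun y2 => (ζ / x1) * y2⁻¹ - lam / x1 + η / (θ + x1)) := by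
      filter_upwards [eventually_gt_nhds hx2] with y hy
      rw [hφ, hf2]
      field_simp
    rw [h1.deriv_eq, h2.deriv_eq]
    have d1 : HasDerivAt (fun y1 : ℝ => α / x2 - (α * β / x2) * y1 - 1)
        (-(α * β / x2)) x1 := by
      have := ((hasDerivAt_id x1).const_mul (α * β / x2)).const_sub (α / x2)
      simpa using this.sub_const 1
    have d2 : HasDerivAt (fun y2 : ℝ => (ζ / x1) * y2⁻¹ - lam / x1 + η / (θ + x1))
        (-(ζ / (x1 * x2 ^ 2))) x2 := by
      have := ((hasDerivAt_inv hx2.ne').const_mul (ζ / x1)).sub_const (lam / x1)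
      have h := this.add_const (η / (θ + x1))
      convert h using 1
      · rfl
      · rfl
      · field_simp
    rw [d1.deriv, d2.deriv]
    ring
  · have : 0 < α * β / x2 + ζ / (x1 * x2 ^ 2) := by positivity
    linarith
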